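/- Let φ be a locally finite collection of compact subsets of ℝ^d, and suppose the union of the sets in φ decomposes into connected components, each containing only finitely many members of φ. Assume that for each connected component φ_i the h-values of distinct hard-core subsets of φ_i have distinct sums, and let φ_max be the union over i of the unique hard-core subset of φ_i maximizing the sum of h-values. Then φ_max is a locally h-maximal hard-core thinning of φ, and conversely every locally h-maximal hard-core thinning of φ equals φ_max. -/

import Mathlib

open scoped BigOperators symmDiff

def HardCore {E : Type*} [TopologicalSpace E] (ψ : Set (Set E)) : Prop :=
  ∀ K ∈ ψ, ∀ L ∈ ψ, K ≠ L → interior K ∩ interior L = ∅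

def LocallyHMax {E : Type*} [TopologicalSpace E] (h : Set E → ℝ)
    (φ ψ : Set (Set E)) : Prop :=
  ψ ⊆ φ ∧ HardCore ψ ∧
    ∀ ψ' : Set (Set E), ψ' ⊆ φ → HardCore ψ' → (ψ ∆ ψ').Finite → ψ' ≠ ψ →
      ∑ᶠ K ∈ (ψ' \ ψ), h K < ∑ᶠ K ∈ (ψ \ ψ'), h K

def LocFinite {d : ℕ} (φ : Set (Set (EuclideanSpace ℝ (Fin d)))) : Prop :=
  ∀ R : ℝ, {K ∈ φ | (K ∩ Metric.closedBall 0 R).Nonempty}.Finite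

/-- The connected component of the grain `K` in `φ`: equivalence class of grains under
the transitive closure of the intersection relation. -/
def Component {E : Type*} (φ : Set (Set E)) (K : Set E) : Set (Set E) :=
  {L ∈ φ | Relation.ReflTransGen (fun A B => A ∈ φ ∧ B ∈ φ ∧ (A ∩ B).Nonempty) K L}

section AuxLemmas

lemma HardCore.mono {E : Type*} [TopologicalSpace E] {ψ ψ' : Set (Set E)}
    (h : HardCore ψ) (hsub : ψ' ⊆ ψ) : HardCore ψ' :=
  fun K hK L hL hne => h K (hsub hK) L (hsub hL) hne

lemma mem_component_self {E : Type*} {φ : Set (Set E)} {K : Set E} (hK : K ∈ φ) :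
    K ∈ Component φ K := ⟨hK, Relation.ReflTransGen.refl⟩

lemma component_subset {E : Type*} {φ : Set (Set E)} {K : Set E} :
    Component φ K ⊆ φ := fun _ hL => hL.1

lemma comp_rel_symm {E : Type*} {φ : Set (Set E)} :
    Symmetric (fun A B : Set E => A ∈ φ ∧ B ∈ φ ∧ (A ∩ B).Nonempty) := by
  rintro A B ⟨ha, hb, hab⟩
  exact ⟨hb, ha, by rwa [Set.inter_comm]⟩

lemma component_eq {E : Type*} {φ : Set (Set E)} {K L : Set E}
    (hL : L ∈ Component φ K) : Component φ L = Component φ K := by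
  ext X
  constructor
  · rintro ⟨hX, hr⟩
    exact ⟨hX, hL.2.trans hr⟩
  · rintro ⟨hX, hr⟩
    haveI : Std.Symm (fun A B : Set E => A ∈ φ ∧ B ∈ φ ∧ (A ∩ B).Nonempty) :=
      ⟨fun a b => @comp_rel_symm E φ a b⟩
    exact ⟨hX, ((Relation.ReflTransGen.symmetric
      (r := fun A B : Set E => A ∈ φ ∧ B ∈ φ ∧ (A ∩ B).Nonempty)).symm _ _ hL.2).trans hr⟩

lemma mem_component_of_inter {E : Type*} {φ : Set (Set E)} {K L : Set E}
    (hK : K ∈ φ) (hL : L ∈ φ) (hKL : (K ∩ L).Nonempty) : L ∈ Component φ K :=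
  ⟨hL, Relation.ReflTransGen.single ⟨hK, hL, hKL⟩⟩

lemma finsum_mem_finite {α : Type*} (f : α → ℝ) {s : Set α} (hs : s.Finite) :
    ∑ᶠ i ∈ s, f i = ∑ i ∈ hs.toFinset, f i := by
  rw [← finsum_mem_coe_finset, Set.Finite.coe_toFinset]

lemma sum_sdiff_le_sum_sdiff_of_le {α : Type*} [DecidableEq α] {A B : Finset α} {f : α → ℝ}
    (hle : ∑ i ∈ A, f i ≤ ∑ i ∈ B, f i) :
    ∑ i ∈ A \ B, f i ≤ ∑ i ∈ B \ A, f i := by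
  have h1 := Finset.sum_inter_add_sum_sdiff A B f
  have h2 := Finset.sum_inter_add_sum_sdiff B A f
  rw [Finset.inter_comm] at h2
  linarith

lemma sum_sdiff_lt_sum_sdiff_of_lt {α : Type*} [DecidableEq α] {A B : Finset α} {f : α → ℝ}
    (hlt : ∑ i ∈ A, f i < ∑ i ∈ B, f i) :
    ∑ i ∈ A \ B, f i < ∑ i ∈ B \ A, f i := by
  have h1 := Finset.sum_inter_add_sum_sdiff A B f
  have h2 := Finset.sum_inter_add_sum_sdiff B A f
  rw [Finset.inter_comm] at h2
  linarith

end AuxLemmas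

/-- suppose each connected component of the locally finite collection `φ`
of compact sets is finite and distinct hard-core subsets of a component have distinct
`h`-sums. If `M` (= `φ_max`) restricts on every component to the unique hard-core subset
maximizing the sum of `h`-values, then `M` is a locally `h`-maximal hard-core thinning
of `φ` and, conversely, every locally `h`-maximal hard-core thinning of `φ` equals `M`. -/
theorem subcritical_uniqueness {d : ℕ}
    (φ M : Set (Set (EuclideanSpace ℝ (Fin d))))
    (h : Set (EuclideanSpace ℝ (Fin d)) → ℝ) (hh : ∀ K, 0 ≤ h K)
    (hφ : LocFinite φ) (hcpt : ∀ K ∈ φ, IsCompact K)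
    (hfin : ∀ K ∈ φ, (Component φ K).Finite)
    (hdist : ∀ K ∈ φ, ∀ s t : Set (Set (EuclideanSpace ℝ (Fin d))),
      s ⊆ Component φ K → t ⊆ Component φ K → HardCore s → HardCore t → s ≠ t →
      ∑ᶠ L ∈ s, h L ≠ ∑ᶠ L ∈ t, h L)
    (hMsub : M ⊆ φ)
    (hMhc : ∀ K ∈ φ, HardCore (M ∩ Component φ K))
    (hMmax : ∀ K ∈ φ, ∀ s : Set (Set (EuclideanSpace ℝ (Fin d))),
      s ⊆ Component φ K → HardCore s →
      ∑ᶠ L ∈ s, h L ≤ ∑ᶠ L ∈ (M ∩ Component φ K), h L) :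
    LocallyHMax h φ M ∧
      ∀ ψ : Set (Set (EuclideanSpace ℝ (Fin d))), LocallyHMax h φ ψ → ψ = M := by
  classical
  -- M is hard-core
  have hMhard : HardCore M := by
    intro K hK L hL hne
    by_contra hint
    have hKL : (K ∩ L).Nonempty := by
      obtain ⟨x, hx⟩ := Set.nonempty_iff_ne_empty.2 hint
      exact ⟨x, interior_subset hx.1, interior_subset hx.2⟩
    exact hint (hMhc K (hMsub hK) K ⟨hK, mem_component_self (hMsub hK)⟩
      L ⟨hL, mem_component_of_inter (hMsub hK) (hMsub hL) hKL⟩ hne)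
  -- per-component comparison
  have step : ∀ ψ' : Set (Set (EuclideanSpace ℝ (Fin d))), ψ' ⊆ φ → HardCore ψ' → ∀ X, X ∈ φ →
      ∀ (hPf : ((ψ' \ M) ∩ Component φ X).Finite)
        (hQf : ((M \ ψ') ∩ Component φ X).Finite),
      (∑ L ∈ hPf.toFinset, h L ≤ ∑ L ∈ hQf.toFinset, h L) ∧
      (ψ' ∩ Component φ X ≠ M ∩ Component φ X →
        ∑ L ∈ hPf.toFinset, h L < ∑ L ∈ hQf.toFinset, h L) := by
    intro ψ' hsub hhc X hXφ hPf hQf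
    have hAfin : (ψ' ∩ Component φ X).Finite :=
      (hfin X hXφ).subset Set.inter_subset_right
    have hBfin : (M ∩ Component φ X).Finite :=
      (hfin X hXφ).subset Set.inter_subset_right
    have hAhc : HardCore (ψ' ∩ Component φ X) := hhc.mono Set.inter_subset_left
    have hle : ∑ᶠ L ∈ (ψ' ∩ Component φ X), h L ≤ ∑ᶠ L ∈ (M ∩ Component φ X), h L :=
      hMmax X hXφ _ Set.inter_subset_right hAhc
    have hPeq : hPf.toFinset = hAfin.toFinset \ hBfin.toFinset := by
      ext x
      simp only [Set.Finite.mem_toFinset, Finset.mem_sdiff, Set.mem_inter_iff,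
        Set.mem_diff]
      tauto
    have hQeq : hQf.toFinset = hBfin.toFinset \ hAfin.toFinset := by
      ext x
      simp only [Set.Finite.mem_toFinset, Finset.mem_sdiff, Set.mem_inter_iff,
        Set.mem_diff]
      tauto
    rw [finsum_mem_finite h hAfin, finsum_mem_finite h hBfin] at hle
    constructor
    · rw [hPeq, hQeq]
      exact sum_sdiff_le_sum_sdiff_of_le hle
    · intro hne
      have hne' : ∑ᶠ L ∈ (ψ' ∩ Component φ X), h L ≠ ∑ᶠ L ∈ (M ∩ Component φ X), h L :=
        hdist X hXφ _ _ Set.inter_subset_right Set.inter_subset_right hAhc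
          (hMhc X hXφ) hne
      rw [finsum_mem_finite h hAfin, finsum_mem_finite h hBfin] at hne'
      rw [hPeq, hQeq]
      exact sum_sdiff_lt_sum_sdiff_of_lt (lt_of_le_of_ne hle hne')
  -- the main strict inequality
  have main : ∀ ψ' : Set (Set (EuclideanSpace ℝ (Fin d))), ψ' ⊆ φ → HardCore ψ' → (M ∆ ψ').Finite → ψ' ≠ M →
      ∑ᶠ K ∈ (ψ' \ M), h K < ∑ᶠ K ∈ (M \ ψ'), h K := by
    intro ψ' hsub hhc hDfin hne
    have hPsub : ψ' \ M ⊆ M ∆ ψ' := fun x hx => Set.mem_symmDiff.2 (Or.inr ⟨hx.1, hx.2⟩)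
    have hQsub : M \ ψ' ⊆ M ∆ ψ' := fun x hx => Set.mem_symmDiff.2 (Or.inl ⟨hx.1, hx.2⟩)
    have hDφ : M ∆ ψ' ⊆ φ := by
      intro x hx
      rcases Set.mem_symmDiff.1 hx with ⟨hx1, _⟩ | ⟨hx1, _⟩
      · exact hMsub hx1
      · exact hsub hx1
    have hPfin : (ψ' \ M).Finite := hDfin.subset hPsub
    have hQfin : (M \ ψ').Finite := hDfin.subset hQsub
    set g : Set (EuclideanSpace ℝ (Fin d)) → Set (Set (EuclideanSpace ℝ (Fin d))) := fun X => Component φ X with hg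
    set 𝒞 : Finset (Set (Set (EuclideanSpace ℝ (Fin d)))) := hDfin.toFinset.image g with h𝒞
    have hmapsP : ∀ x ∈ hPfin.toFinset, g x ∈ 𝒞 := by
      intro x hx
      rw [Set.Finite.mem_toFinset] at hx
      exact Finset.mem_image_of_mem g (hDfin.mem_toFinset.2 (hPsub hx))
    have hmapsQ : ∀ x ∈ hQfin.toFinset, g x ∈ 𝒞 := by
      intro x hx
      rw [Set.Finite.mem_toFinset] at hx
      exact Finset.mem_image_of_mem g (hDfin.mem_toFinset.2 (hQsub hx))
    have hfilter : ∀ (s : Set (Set (EuclideanSpace ℝ (Fin d)))), s ⊆ φ → ∀ (hsf : s.Finite) (X : Set (EuclideanSpace ℝ (Fin d))),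
        X ∈ φ → ∀ (hsC : (s ∩ Component φ X).Finite),
        hsf.toFinset.filter (fun x => g x = Component φ X) = hsC.toFinset := by
      intro s hs hsf X hXφ hsC
      ext x
      simp only [Finset.mem_filter, Set.Finite.mem_toFinset, Set.mem_inter_iff, hg]
      constructor
      · rintro ⟨hx, heq⟩
        exact ⟨hx, heq ▸ mem_component_self (hs hx)⟩
      · rintro ⟨hx, hxC⟩
        exact ⟨hx, component_eq hxC⟩
    rw [finsum_mem_finite h hPfin, finsum_mem_finite h hQfin,
      ← Finset.sum_fiberwise_of_maps_to hmapsP h,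
      ← Finset.sum_fiberwise_of_maps_to hmapsQ h]
    -- witness component where ψ' and M differ
    obtain ⟨X₀, hX₀⟩ := Set.symmDiff_nonempty.2 (Ne.symm hne)
    have hX₀φ : X₀ ∈ φ := hDφ hX₀
    have hwit : ψ' ∩ Component φ X₀ ≠ M ∩ Component φ X₀ := by
      rcases Set.mem_symmDiff.1 hX₀ with ⟨hx1, hx2⟩ | ⟨hx1, hx2⟩
      · intro heq
        have : X₀ ∈ ψ' ∩ Component φ X₀ := heq ▸ ⟨hx1, mem_component_self hX₀φ⟩
        exact hx2 this.1
      · intro heq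
        have : X₀ ∈ M ∩ Component φ X₀ := heq.symm ▸ ⟨hx1, mem_component_self hX₀φ⟩
        exact hx2 this.1
    apply Finset.sum_lt_sum
    · intro C hC
      obtain ⟨X, hXD, rfl⟩ := Finset.mem_image.1 hC
      have hXφ : X ∈ φ := hDφ (hDfin.mem_toFinset.1 hXD)
      have hPC : ((ψ' \ M) ∩ Component φ X).Finite :=
        (hfin X hXφ).subset Set.inter_subset_right
      have hQC : ((M \ ψ') ∩ Component φ X).Finite :=
        (hfin X hXφ).subset Set.inter_subset_right
      rw [hfilter (ψ' \ M) (fun x hx => hsub hx.1) hPfin X hXφ hPC,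
        hfilter (M \ ψ') (fun x hx => hMsub hx.1) hQfin X hXφ hQC]
      exact (step ψ' hsub hhc X hXφ hPC hQC).1
    · refine ⟨g X₀, Finset.mem_image_of_mem g (hDfin.mem_toFinset.2 hX₀), ?_⟩
      have hPC : ((ψ' \ M) ∩ Component φ X₀).Finite :=
        (hfin X₀ hX₀φ).subset Set.inter_subset_right
      have hQC : ((M \ ψ') ∩ Component φ X₀).Finite :=
        (hfin X₀ hX₀φ).subset Set.inter_subset_right
      rw [hg]
      rw [hfilter (ψ' \ M) (fun x hx => hsub hx.1) hPfin X₀ hX₀φ hPC,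
        hfilter (M \ ψ') (fun x hx => hMsub hx.1) hQfin X₀ hX₀φ hQC]
      exact (step ψ' hsub hhc X₀ hX₀φ hPC hQC).2 hwit
  refine ⟨⟨hMsub, hMhard, main⟩, ?_⟩
  -- uniqueness
  intro ψ hψ
  by_contra hneq
  obtain ⟨X, hX⟩ := Set.symmDiff_nonempty.2 hneq
  have hXφ : X ∈ φ := by
    rcases Set.mem_symmDiff.1 hX with ⟨hx1, _⟩ | ⟨hx1, _⟩
    · exact hψ.1 hx1
    · exact hMsub hx1
  set C : Set (Set (EuclideanSpace ℝ (Fin d))) := Component φ X with hC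
  have hCfin : C.Finite := hfin X hXφ
  set ψ'' : Set (Set (EuclideanSpace ℝ (Fin d))) := (ψ \ C) ∪ (M ∩ C) with hψ''
  have hsub'' : ψ'' ⊆ φ := by
    rintro K (hK | hK)
    · exact hψ.1 hK.1
    · exact hMsub hK.1
  have hhc'' : HardCore ψ'' := by
    rintro K (hK | hK) L (hL | hL) hne
    · exact hψ.2.1 K hK.1 L hL.1 hne
    · by_contra hint
      obtain ⟨x, hx⟩ := Set.nonempty_iff_ne_empty.2 hint
      have hKL : (L ∩ K).Nonempty :=
        ⟨x, interior_subset hx.2, interior_subset hx.1⟩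
      have hKC : K ∈ Component φ L :=
        mem_component_of_inter (hMsub hL.1) (hψ.1 hK.1) hKL
      have : K ∈ C := by rw [hC]; exact (component_eq hL.2) ▸ hKC
      exact hK.2 this
    · by_contra hint
      obtain ⟨x, hx⟩ := Set.nonempty_iff_ne_empty.2 hint
      have hKL : (K ∩ L).Nonempty :=
        ⟨x, interior_subset hx.1, interior_subset hx.2⟩
      have hLC : L ∈ Component φ K :=
        mem_component_of_inter (hMsub hK.1) (hψ.1 hL.1) hKL
      have : L ∈ C := by rw [hC]; exact (component_eq hK.2) ▸ hLC
      exact hL.2 this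
    · exact hMhc X hXφ K hK L hL hne
  have hDfin'' : (ψ ∆ ψ'').Finite := by
    apply hCfin.subset
    intro x hx
    rcases Set.mem_symmDiff.1 hx with ⟨hx1, hx2⟩ | ⟨hx1, hx2⟩
    · by_contra hxC
      exact hx2 (Or.inl ⟨hx1, hxC⟩)
    · rcases hx1 with hx1 | hx1
      · exact absurd hx1.1 hx2
      · exact hx1.2
  have hne'' : ψ'' ≠ ψ := by
    rcases Set.mem_symmDiff.1 hX with ⟨hx1, hx2⟩ | ⟨hx1, hx2⟩
    · -- X ∈ ψ, X ∉ M
      intro heq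
      have hXC : X ∈ C := mem_component_self hXφ
      have : X ∈ ψ'' := heq.symm ▸ hx1
      rcases this with hmem | hmem
      · exact hmem.2 hXC
      · exact hx2 hmem.1
    · -- X ∈ M, X ∉ ψ
      intro heq
      have hXC : X ∈ C := mem_component_self hXφ
      have : X ∈ ψ'' := Or.inr ⟨hx1, hXC⟩
      exact hx2 (heq ▸ this)
  have hlt := hψ.2.2 ψ'' hsub'' hhc'' hDfin'' hne''
  have hd1 : ψ'' \ ψ = (M ∩ C) \ (ψ ∩ C) := by
    ext x
    simp only [Set.mem_diff, Set.mem_union, Set.mem_inter_iff, hψ'']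
    tauto
  have hd2 : ψ \ ψ'' = (ψ ∩ C) \ (M ∩ C) := by
    ext x
    constructor
    · rintro ⟨hx1, hx2⟩
      have hxC : x ∈ C := by
        by_contra hxC
        exact hx2 (Or.inl ⟨hx1, hxC⟩)
      exact ⟨⟨hx1, hxC⟩, fun hm => hx2 (Or.inr hm)⟩
    · rintro ⟨⟨hx1, hxC⟩, hx2⟩
      refine ⟨hx1, ?_⟩
      rintro (hm | hm)
      · exact hm.2 hxC
      · exact hx2 hm
  rw [hd1, hd2] at hlt
  -- contradiction with maximality of M on C
  have hAfin : (ψ ∩ C).Finite := hCfin.subset Set.inter_subset_right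
  have hBfin : (M ∩ C).Finite := hCfin.subset Set.inter_subset_right
  have hle : ∑ᶠ L ∈ (ψ ∩ C), h L ≤ ∑ᶠ L ∈ (M ∩ C), h L :=
    hMmax X hXφ _ Set.inter_subset_right (hψ.2.1.mono Set.inter_subset_left)
  rw [finsum_mem_finite h hAfin, finsum_mem_finite h hBfin] at hle
  have hPfin' : ((M ∩ C) \ (ψ ∩ C)).Finite := hBfin.subset Set.diff_subset
  have hQfin' : ((ψ ∩ C) \ (M ∩ C)).Finite := hAfin.subset Set.diff_subset
  rw [finsum_mem_finite h hPfin', finsum_mem_finite h hQfin'] at hlt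
  have hPeq : hPfin'.toFinset = hBfin.toFinset \ hAfin.toFinset := by
    ext x
    simp only [Set.Finite.mem_toFinset, Finset.mem_sdiff, Set.mem_diff]
  have hQeq : hQfin'.toFinset = hAfin.toFinset \ hBfin.toFinset := by
    ext x
    simp only [Set.Finite.mem_toFinset, Finset.mem_sdiff, Set.mem_diff]
  rw [hPeq, hQeq] at hlt
  have := sum_sdiff_le_sum_sdiff_of_le (A := hAfin.toFinset) (B := hBfin.toFinset)
    (f := h) hle
  linarith
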